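/- Let s : (l, r) → ℝ be a strictly increasing C¹ function with strictly positive locally absolutely continuous derivative s', and let q = s⁻¹. Then Lebesgue-a.e., (q''(u)/q'(u))² = (β(q(u))·q'(u))², where β = s''/s' (defined a.e.), and this function is locally integrable on s((l,r)) whenever β² is locally integrable on (l,r). -/

import Mathlib

open MeasureTheory Set Filter
open scoped Topology

open IsUnifLocDoublingMeasure in
/-- A.e. version of FTC: the primitive of a locally integrable function has derivative
equal to the function a.e. (Lebesgue differentiation theorem). -/
lemma ae_ftc_aux (f : ℝ → ℝ) (hf : LocallyIntegrable f volume) (a : ℝ) :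
    ∀ᵐ x, HasDerivAt (fun v => ∫ t in a..v, f t) (f x) x := by
  have hII : ∀ u v : ℝ, IntervalIntegrable f volume u v := fun u v =>
    (intervalIntegrable_iff' enorm_ne_top).2 (hf.integrableOn_isCompact isCompact_uIcc)
  filter_upwards [(vitaliFamily (volume : Measure ℝ) 1).ae_tendsto_average hf] with x hx
  rw [hasDerivAt_iff_tendsto_slope, ← nhdsLT_sup_nhdsGT, tendsto_sup]
  constructor
  · have h1 : Tendsto (fun y => ⨍ t in Icc y x, f t) (𝓝[<] x) (𝓝 (f x)) :=
      hx.comp (Real.tendsto_Icc_vitaliFamily_left x)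
    refine h1.congr' ?_
    filter_upwards [self_mem_nhdsWithin] with y (hy : y < x)
    have hxy : x - y ≠ 0 := by intro h; linarith [sub_eq_zero.1 h]
    have hyx : y - x ≠ 0 := by intro h; linarith [sub_eq_zero.1 h]
    have key : ∫ t in y..x, f t = ∫ t in Icc y x, f t := by
      rw [intervalIntegral.integral_of_le hy.le, ← integral_Icc_eq_integral_Ioc]
    have hsub : (∫ t in a..x, f t) - ∫ t in a..y, f t = ∫ t in y..x, f t :=
      intervalIntegral.integral_interval_sub_left (hII a x) (hII a y)
    have havg : ⨍ t in Icc y x, f t = (x - y)⁻¹ * ∫ t in Icc y x, f t := by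
      rw [setAverage_eq, Real.volume_real_Icc_of_le hy.le, smul_eq_mul]
    rw [havg, ← key, ← hsub, slope_def_field]
    field_simp
    ring
  · have h1 : Tendsto (fun y => ⨍ t in Icc x y, f t) (𝓝[>] x) (𝓝 (f x)) :=
      hx.comp (Real.tendsto_Icc_vitaliFamily_right x)
    refine h1.congr' ?_
    filter_upwards [self_mem_nhdsWithin] with y (hy : x < y)
    have hxy : y - x ≠ 0 := by intro h; linarith [sub_eq_zero.1 h]
    have key : ∫ t in x..y, f t = ∫ t in Icc x y, f t := by
      rw [intervalIntegral.integral_of_le hy.le, ← integral_Icc_eq_integral_Ioc]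
    have hsub : (∫ t in a..y, f t) - ∫ t in a..x, f t = ∫ t in x..y, f t :=
      intervalIntegral.integral_interval_sub_left (hII a y) (hII a x)
    have havg : ⨍ t in Icc x y, f t = (y - x)⁻¹ * ∫ t in Icc x y, f t := by
      rw [setAverage_eq, Real.volume_real_Icc_of_le hy.le, smul_eq_mul]
    rw [havg, ← key, ← hsub, slope_def_field]
    field_simp

/-- A locally absolutely continuous function (given via the integral identity on an open set)
has derivative equal to its a.e.-derivative a.e. on the open set. -/
lemma ae_deriv_of_ac (U : Set ℝ) (hU : IsOpen U) (F f : ℝ → ℝ) (hm : Measurable f)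
    (h : ∀ u v : ℝ, u ∈ U → v ∈ U → u ≤ v →
      IntervalIntegrable f volume u v ∧ F v - F u = ∫ w in u..v, f w) :
    ∀ᵐ x ∂(volume.restrict U), HasDerivAt F (f x) x := by
  have key : ∀ p : ℚ × ℚ, Icc (p.1 : ℝ) (p.2 : ℝ) ⊆ U →
      ∀ᵐ x ∂(volume.restrict (Ioo (p.1 : ℝ) (p.2 : ℝ))), HasDerivAt F (f x) x := by
    rintro ⟨a, b⟩ hab
    rcases le_or_gt (b : ℝ) (a : ℝ) with hba | hab'
    · rw [Ioo_eq_empty (not_lt.2 hba), Measure.restrict_empty]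
      simp
    · have haU : (a : ℝ) ∈ U := hab ⟨le_refl _, hab'.le⟩
      set g : ℝ → ℝ := (Icc (a : ℝ) (b : ℝ)).indicator f with hgdef
      have hgint : Integrable g volume := by
        rw [hgdef, integrable_indicator_iff measurableSet_Icc]
        exact (intervalIntegrable_iff_integrableOn_Icc_of_le hab'.le).1
          (h a b haU (hab ⟨hab'.le, le_refl _⟩) hab'.le).1
      filter_upwards [ae_restrict_of_ae (ae_ftc_aux g hgint.locallyIntegrable (a : ℝ)),
        ae_restrict_mem measurableSet_Ioo] with x hx hxI
      have hgx : g x = f x := indicator_of_mem (Ioo_subset_Icc_self hxI) f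
      have heq : F =ᶠ[𝓝 x] fun v => (∫ t in (a : ℝ)..v, g t) + F a := by
        filter_upwards [isOpen_Ioo.mem_nhds hxI] with v hvI
        have hvU : v ∈ U := hab (Ioo_subset_Icc_self hvI)
        have h1 : ∫ t in (a : ℝ)..v, g t = ∫ t in (a : ℝ)..v, f t := by
          apply intervalIntegral.integral_congr
          intro t ht
          rw [uIcc_of_le hvI.1.le] at ht
          exact indicator_of_mem (Icc_subset_Icc le_rfl hvI.2.le ht) f
        rw [h1, ← (h a v haU hvU hvI.1.le).2]
        ring
      rw [← hgx]
      exact (hx.add_const (F a)).congr_of_eventuallyEq heq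
  have hUsub : U ⊆ ⋃ p ∈ {p : ℚ × ℚ | Icc (p.1 : ℝ) (p.2 : ℝ) ⊆ U},
      Ioo ((p.1 : ℝ)) ((p.2 : ℝ)) := by
    intro x hx
    obtain ⟨ε, hε, hball⟩ := Metric.isOpen_iff.1 hU x hx
    obtain ⟨a, ha1, ha2⟩ := exists_rat_btwn (show x - ε / 2 < x by linarith)
    obtain ⟨b, hb1, hb2⟩ := exists_rat_btwn (show x < x + ε / 2 by linarith)
    have hmem : (a, b) ∈ {p : ℚ × ℚ | Icc (p.1 : ℝ) (p.2 : ℝ) ⊆ U} := by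
      intro t ht
      apply hball
      simp only [Metric.mem_ball, Real.dist_eq, abs_lt]
      constructor <;> [linarith [ht.1]; linarith [ht.2]]
    exact mem_biUnion hmem ⟨ha2, hb1⟩
  refine ae_restrict_of_ae_restrict_of_subset hUsub ?_
  rw [ae_restrict_biUnion_iff _ (Set.to_countable _)]
  exact fun p hp => key p hp

/-- Let `s : (l,r) → ℝ` be strictly increasing and C¹ with strictly positive
locally absolutely continuous derivative `s'` (a.e. derivative `s''`), `β = s''/s'` with `β²`
locally integrable, and `q = s⁻¹` with derivative `q'` and a.e. second derivative `q''`.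
Then Lebesgue-a.e. on `s((l,r))`, `(q''(u)/q'(u))² = (β(q(u))·q'(u))²`, and this function is
locally integrable on `s((l,r))`. -/
theorem stmt3 (l r : ℝ) (hlr : l < r)
    (s s' s'' β q q' q'' : ℝ → ℝ)
    (hmono : StrictMonoOn s (Ioo l r))
    (hderiv : ∀ x ∈ Ioo l r, HasDerivAt s (s' x) x)
    (hs'pos : ∀ x ∈ Ioo l r, 0 < s' x)
    (hs'cont : ContinuousOn s' (Ioo l r))
    (hs'' : Measurable s'')
    (hAC : ∀ x y : ℝ, x ∈ Ioo l r → y ∈ Ioo l r → x ≤ y →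
      (IntervalIntegrable s'' volume x y ∧ s' y - s' x = ∫ z in x..y, s'' z))
    (hβ : ∀ x ∈ Ioo l r, β x = s'' x / s' x)
    (hβloc : LocallyIntegrableOn (fun x => (β x) ^ 2) (Ioo l r) volume)
    (hq : ∀ x ∈ Ioo l r, q (s x) = x)
    (hq' : ∀ u ∈ s '' Ioo l r, HasDerivAt q (q' u) u)
    (hq'' : Measurable q'')
    (hqAC : ∀ u v : ℝ, u ∈ s '' Ioo l r → v ∈ s '' Ioo l r → u ≤ v →
      (IntervalIntegrable q'' volume u v ∧ q' v - q' u = ∫ w in u..v, q'' w)) :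
    (∀ᵐ u ∂(volume.restrict (s '' Ioo l r)),
        (q'' u / q' u) ^ 2 = (β (q u) * q' u) ^ 2) ∧
      LocallyIntegrableOn (fun u => (q'' u / q' u) ^ 2) (s '' Ioo l r) volume := by
  set J : Set ℝ := s '' Ioo l r with hJdef
  -- basic facts about q on J
  have hJx : ∀ v ∈ J, q v ∈ Ioo l r ∧ s (q v) = v ∧ q' v * s' (q v) = 1 := by
    rintro v ⟨x, hx, rfl⟩
    have h1 : q (s x) = x := hq x hx
    have hcomp : HasDerivAt (q ∘ s) (q' (s x) * s' x) x :=
      (hq' _ ⟨x, hx, rfl⟩).comp x (hderiv x hx)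
    have hid : HasDerivAt (q ∘ s) 1 x := by
      have heq : (q ∘ s) =ᶠ[𝓝 x] id := by
        filter_upwards [isOpen_Ioo.mem_nhds hx] with y hy using hq y hy
      exact (hasDerivAt_id x).congr_of_eventuallyEq heq
    have huni : q' (s x) * s' x = 1 := hcomp.unique hid
    rw [h1]
    exact ⟨hx, rfl, huni⟩
  -- J is open
  have hJopen : IsOpen J := by
    rw [isOpen_iff_mem_nhds]
    rintro v ⟨x, hx, rfl⟩
    obtain ⟨ε, hε, hsub⟩ : ∃ ε > 0, Icc (x - ε) (x + ε) ⊆ Ioo l r := by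
      have h1 := hx.1; have h2 := hx.2
      have hpos : 0 < min (x - l) (r - x) / 2 := by
        have := lt_min (by linarith : (0:ℝ) < x - l) (by linarith : (0:ℝ) < r - x)
        linarith
      refine ⟨min (x - l) (r - x) / 2, hpos, fun t ht => ?_⟩
      have h3 : min (x - l) (r - x) / 2 ≤ (x - l) / 2 := by
        have := min_le_left (x - l) (r - x); linarith
      have h4 : min (x - l) (r - x) / 2 ≤ (r - x) / 2 := by
        have := min_le_right (x - l) (r - x); linarith
      exact ⟨by linarith [ht.1], by linarith [ht.2]⟩
    have hxa : x - ε ∈ Ioo l r := hsub ⟨le_refl _, by linarith⟩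
    have hxb : x + ε ∈ Ioo l r := hsub ⟨by linarith, le_refl _⟩
    have hcont : ContinuousOn s (Icc (x - ε) (x + ε)) := fun y hy =>
      ((hderiv y (hsub hy)).continuousAt).continuousWithinAt
    have hiv := intermediate_value_Ioo (by linarith : x - ε ≤ x + ε) hcont
    have hmem : s x ∈ Ioo (s (x - ε)) (s (x + ε)) :=
      ⟨hmono hxa hx (by linarith), hmono hx hxb (by linarith)⟩
    exact mem_nhds_iff.2 ⟨Ioo (s (x - ε)) (s (x + ε)),
      hiv.trans (image_mono fun t ht => hsub (Ioo_subset_Icc_self ht)), isOpen_Ioo, hmem⟩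
  -- a.e. differentiability of s' and q'
  have hs'ae : ∀ᵐ x ∂(volume.restrict (Ioo l r)), HasDerivAt s' (s'' x) x :=
    ae_deriv_of_ac (Ioo l r) isOpen_Ioo s' s'' hs'' hAC
  have hq'ae : ∀ᵐ u ∂(volume.restrict J), HasDerivAt q' (q'' u) u :=
    ae_deriv_of_ac J hJopen q' q'' hq'' hqAC
  -- the bad set for s' has null image under s
  have hNnull : volume ({x | ¬ HasDerivAt s' (s'' x) x} ∩ Ioo l r) = 0 := by
    have h0 : (volume.restrict (Ioo l r)) {x | ¬ HasDerivAt s' (s'' x) x} = 0 := hs'ae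
    rwa [Measure.restrict_apply' measurableSet_Ioo] at h0
  have himg : volume (s '' ({x | ¬ HasDerivAt s' (s'' x) x} ∩ Ioo l r)) = 0 := by
    apply addHaar_image_eq_zero_of_differentiableOn_of_addHaar_eq_zero (μ := volume)
      (fun x hx => ((hderiv x hx.2).differentiableAt).differentiableWithinAt) hNnull
  have hGood : ∀ᵐ u ∂(volume.restrict J), HasDerivAt s' (s'' (q u)) (q u) := by
    rw [ae_iff, Measure.restrict_apply' hJopen.measurableSet]
    refine measure_mono_null ?_ himg
    rintro u ⟨hnp, x, hx, rfl⟩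
    have hqu : q (s x) = x := hq x hx
    refine ⟨q (s x), ⟨hnp, ?_⟩, by rw [hqu]⟩
    rw [hqu]; exact hx
  -- main a.e. identity
  have haemain : ∀ᵐ u ∂(volume.restrict J),
      (q'' u / q' u) ^ 2 = (β (q u) * q' u) ^ 2 := by
    filter_upwards [hq'ae, hGood, ae_restrict_mem hJopen.measurableSet] with u hd1 hd2 huJ
    obtain ⟨hqI, hsq, hprod⟩ := hJx u huJ
    have hs'x : 0 < s' (q u) := hs'pos _ hqI
    have hq'u : q' u = (s' (q u))⁻¹ :=
      eq_inv_of_mul_eq_one_left hprod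
    have hcomp : HasDerivAt (fun v => s' (q v)) (s'' (q u) * q' u) u :=
      hd2.comp u (hq' u huJ)
    have hinv : HasDerivAt (fun v => (s' (q v))⁻¹)
        (-(s'' (q u) * q' u) / (s' (q u)) ^ 2) u := hcomp.inv (ne_of_gt hs'x)
    have heq : q' =ᶠ[𝓝 u] fun v => (s' (q v))⁻¹ := by
      filter_upwards [hJopen.mem_nhds huJ] with v hvJ
      exact eq_inv_of_mul_eq_one_left (hJx v hvJ).2.2
    have hd1' : HasDerivAt q' (-(s'' (q u) * q' u) / (s' (q u)) ^ 2) u :=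
      hinv.congr_of_eventuallyEq heq
    have huniq : q'' u = -(s'' (q u) * q' u) / (s' (q u)) ^ 2 := hd1.unique hd1'
    rw [huniq, hβ _ hqI, hq'u]
    have hne : s' (q u) ≠ 0 := ne_of_gt hs'x
    field_simp
  refine ⟨haemain, ?_⟩
  -- local integrability
  intro u0 hu0
  obtain ⟨ε, hε, hball⟩ := Metric.isOpen_iff.1 hJopen u0 hu0
  have hIcc : Icc (u0 - ε / 2) (u0 + ε / 2) ⊆ J := by
    intro t ht
    apply hball
    simp only [Metric.mem_ball, Real.dist_eq, abs_lt]
    exact ⟨by linarith [ht.1], by linarith [ht.2]⟩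
  set a := u0 - ε / 2 with hadef
  set b := u0 + ε / 2 with hbdef
  refine ⟨Icc a b, mem_nhdsWithin_of_mem_nhds
    (Icc_mem_nhds (by rw [hadef]; linarith) (by rw [hbdef]; linarith)), ?_⟩
  set A : Set ℝ := q '' Icc a b with hAdef
  have hqcont : ContinuousOn q (Icc a b) := fun v hv =>
    ((hq' v (hIcc hv)).continuousAt).continuousWithinAt
  have hAcomp : IsCompact A := isCompact_Icc.image_of_continuousOn hqcont
  have hAsub : A ⊆ Ioo l r := by
    rintro _ ⟨v, hv, rfl⟩; exact (hJx v (hIcc hv)).1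
  have hAmeas : MeasurableSet A := hAcomp.measurableSet
  have himgA : s '' A = Icc a b := by
    rw [hAdef, Set.image_image]
    calc (fun v => s (q v)) '' Icc a b = (fun v => v) '' Icc a b :=
          image_congr fun v hv => (hJx v (hIcc hv)).2.1
      _ = Icc a b := image_id _
  obtain ⟨c, hc, hcle⟩ : ∃ c > 0, ∀ x ∈ A, c ≤ s' x := by
    have hAne : A.Nonempty := (nonempty_Icc.2 (by rw [hadef, hbdef]; linarith)).image q
    obtain ⟨x0, hx0A, hx0min⟩ := hAcomp.exists_isMinOn hAne (hs'cont.mono hAsub)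
    exact ⟨s' x0, hs'pos x0 (hAsub hx0A), fun x hx => hx0min hx⟩
  have hβint : IntegrableOn (fun x => (β x) ^ 2) A volume :=
    hβloc.integrableOn_compact_subset hAsub hAcomp
  -- integrability of the transported function on A
  have hcore : IntegrableOn (fun x => (β x) ^ 2 / s' x) A volume := by
    have hmg : AEStronglyMeasurable (fun x => (β x) ^ 2 / s' x) (volume.restrict A) := by
      have hs'm : AEMeasurable s' (volume.restrict A) :=
        (hs'cont.mono hAsub).aemeasurable hAmeas
      have h1 : AEMeasurable (fun x => (s'' x / s' x) ^ 2 / s' x) (volume.restrict A) :=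
        ((hs''.aemeasurable.div hs'm).pow_const 2).div hs'm
      refine (aemeasurable_congr ?_).2 h1 |>.aestronglyMeasurable
      filter_upwards [ae_restrict_mem hAmeas] with x hx
      rw [hβ x (hAsub hx)]
    refine Integrable.mono' (hβint.const_mul c⁻¹) hmg ?_
    filter_upwards [ae_restrict_mem hAmeas] with x hx
    have h1 : c ≤ s' x := hcle x hx
    have h2 : 0 < s' x := lt_of_lt_of_le hc h1
    rw [Real.norm_eq_abs, abs_of_nonneg (div_nonneg (sq_nonneg _) h2.le)]
    calc β x ^ 2 / s' x ≤ β x ^ 2 / c := by gcongr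
      _ = c⁻¹ * β x ^ 2 := by rw [div_eq_inv_mul]
  have hstep : IntegrableOn (fun x => |s' x| • (β (q (s x)) * q' (s x)) ^ 2) A volume := by
    refine hcore.congr_fun (fun x hx => ?_) hAmeas
    have hxI := hAsub hx
    have hqsx : q (s x) = x := hq x hxI
    have hq's : q' (s x) = (s' x)⁻¹ := by
      have h0 := (hJx (s x) ⟨x, hxI, rfl⟩).2.2
      rw [hqsx] at h0
      exact eq_inv_of_mul_eq_one_left h0
    have hs'x := hs'pos x hxI
    have hne : s' x ≠ 0 := ne_of_gt hs'x
    simp only [smul_eq_mul, hqsx, hq's, abs_of_pos hs'x]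
    field_simp
  have hAderiv : ∀ x ∈ A, HasDerivWithinAt s (s' x) A x := fun x hx =>
    (hderiv x (hAsub hx)).hasDerivWithinAt
  have hInj : InjOn s A := hmono.injOn.mono hAsub
  have hint2 : IntegrableOn (fun u => (β (q u) * q' u) ^ 2) (Icc a b) volume := by
    rw [← himgA]
    exact (integrableOn_image_iff_integrableOn_abs_deriv_smul hAmeas hAderiv hInj _).2 hstep
  have haeIcc : ∀ᵐ u ∂(volume.restrict (Icc a b)),
      (q'' u / q' u) ^ 2 = (β (q u) * q' u) ^ 2 :=
    ae_restrict_of_ae_restrict_of_subset hIcc haemain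
  exact hint2.congr (by filter_upwards [haeIcc] with u hu; exact hu.symm)
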